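/- Let A ∈ ℝ^{n×n}, B ∈ ℝ^{n}, C ∈ ℝ^{1×n}, D ∈ ℝ define the discrete-time system x(t+1) = A x(t) + B w(t), z(t) = C x(t) + D w(t), x(0) = 0. Suppose there exists a symmetric positive definite X with the block matrix [[X − AᵀXA, Cᵀ − AᵀXB], [C − BᵀXA, D + Dᵀ − BᵀXB]] positive semidefinite. Then for every input sequence w and every horizon N, Σ_{t=0}^{N−1} z(t) w(t) ≥ 0, i.e., the system is passive. -/

import Mathlib

open Finset Matrix

/-- Discrete-time KYP lemma (sufficiency): existence of a positive definite
storage matrix `X` satisfying the passivity LMI implies the passivity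
inequality `Σ z(t) w(t) ≥ 0` along every trajectory from `x(0) = 0`. -/
theorem stmt_9 (n : ℕ) (A : Matrix (Fin n) (Fin n) ℝ) (B : Fin n → ℝ)
    (C : Fin n → ℝ) (D : ℝ) (X : Matrix (Fin n) (Fin n) ℝ)
    (hX : X.PosDef)
    (hLMI : (Matrix.fromBlocks
        (X - Aᵀ * X * A)
        (Matrix.of fun (i : Fin n) (_ : Unit) => C i - (Aᵀ * X).mulVec B i)
        (Matrix.of fun (_ : Unit) (j : Fin n) => C j - (Aᵀ * X).mulVec B j)
        (Matrix.of fun (_ _ : Unit) => D + D - B ⬝ᵥ X.mulVec B)).PosSemidef)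
    (w : ℕ → ℝ) (x : ℕ → Fin n → ℝ) (z : ℕ → ℝ)
    (hx0 : x 0 = 0)
    (hx : ∀ t, x (t + 1) = A.mulVec (x t) + w t • B)
    (hz : ∀ t, z t = C ⬝ᵥ x t + D * w t) :
    ∀ N : ℕ, 0 ≤ ∑ t ∈ Finset.range N, z t * w t := by
  have key : ∀ t, x (t+1) ⬝ᵥ X.mulVec (x (t+1)) - x t ⬝ᵥ X.mulVec (x t)
      ≤ 2 * (z t * w t) := by
    intro t
    have hsym : ∀ u v : Fin n → ℝ, u ⬝ᵥ X.mulVec v = v ⬝ᵥ X.mulVec u := by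
      intro u v
      rw [dotProduct_mulVec, dotProduct_comm, ← mulVec_transpose, show Xᵀ = X from hX.1]
    have h := hLMI.dotProduct_mulVec_nonneg (Sum.elim (x t) (fun _ => w t))
    have hv1 : (Matrix.of fun i (_:Unit) => C i - ((Aᵀ*X)*ᵥB) i) *ᵥ (fun _ => w t)
        = w t • (C - (Aᵀ*X)*ᵥB) := by
      funext i
      simp [mulVec, dotProduct, mul_comm]
    have hv2 : (Matrix.of fun (_:Unit) j => C j - ((Aᵀ*X)*ᵥB) j) *ᵥ x t
        = fun _ => (C - (Aᵀ*X)*ᵥB) ⬝ᵥ x t := by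
      funext u
      simp [mulVec, dotProduct]
    have hv3 : (Matrix.of fun (_ _ : Unit) => D + D - B ⬝ᵥ X.mulVec B) *ᵥ (fun _ => w t)
        = fun _ => (D + D - B ⬝ᵥ X.mulVec B) * w t := by
      funext u
      simp [mulVec, dotProduct]
    simp only [RCLike.re_to_real, star_trivial, dotProduct_block, fromBlocks_mulVec,
      Sum.elim_comp_inl, Sum.elim_comp_inr, hv1, hv2, hv3, mulVec_add, dotProduct_add,
      sub_mulVec, dotProduct_sub, sub_dotProduct, dotProduct_smul, smul_eq_mul] at h
    simp only [show ∀ c : ℝ, (fun _ : Unit => w t) ⬝ᵥ (fun _ => c) = w t * c by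
      intro c; simp [dotProduct]] at h
    have e1 : x t ⬝ᵥ (Aᵀ * X * A) *ᵥ x t = (A *ᵥ x t) ⬝ᵥ X *ᵥ (A *ᵥ x t) := by
      rw [← mulVec_mulVec, ← mulVec_mulVec, dotProduct_mulVec, vecMul_transpose]
    have e2 : x t ⬝ᵥ (Aᵀ * X) *ᵥ B = (A *ᵥ x t) ⬝ᵥ X *ᵥ B := by
      rw [← mulVec_mulVec, dotProduct_mulVec, vecMul_transpose]
    rw [e1, e2, dotProduct_comm (x t) C, dotProduct_comm ((Aᵀ*X)*ᵥB) (x t), e2] at h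
    rw [hz t, hx t]
    simp only [mulVec_add, mulVec_smul, dotProduct_add, add_dotProduct, smul_dotProduct,
      dotProduct_smul, smul_eq_mul]
    rw [hsym B (A *ᵥ x t), hsym B B] at *
    nlinarith [h]
  have hVpos : ∀ t, 0 ≤ x t ⬝ᵥ X.mulVec (x t) := fun t => hX.posSemidef.dotProduct_mulVec_nonneg (x t)
  intro N
  have htel : x N ⬝ᵥ X.mulVec (x N) - x 0 ⬝ᵥ X.mulVec (x 0)
      ≤ 2 * ∑ t ∈ Finset.range N, z t * w t := by
    rw [Finset.mul_sum]
    induction N with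
    | zero => simp
    | succ N ih =>
      rw [Finset.sum_range_succ]
      have := key N
      linarith
  have h0 : x 0 ⬝ᵥ X.mulVec (x 0) = 0 := by simp [hx0]
  nlinarith [hVpos N]
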